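/- Let μ be a finite nonnegative Borel measure on ℝ^n and let s > 1. If ν is a finite nonnegative Borel measure with ν(B) ≤ (C·μ(B))^s for all Borel sets B, then for μ-almost every x which is not an atom of μ, the Radon–Nikodym derivative dν/dμ(x) equals 0. -/

import Mathlib

open MeasureTheory Set Filter
open scoped ENNReal Topology

/-- If `ν B ≤ (C μ(B))^s` for all Borel `B` with `s > 1`, then for `μ`-a.e.
point `x` which is not an atom of `μ`, the Radon–Nikodym derivative `dν/dμ (x)` is `0`. -/
theorem stmt2 (n : ℕ) (μ ν : Measure (EuclideanSpace ℝ (Fin n)))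
    [IsFiniteMeasure μ] [IsFiniteMeasure ν]
    (C s : ℝ) (hC : 0 < C) (hs : 1 < s)
    (h : ∀ B, MeasurableSet B → ν B ≤ (ENNReal.ofReal C * μ B) ^ s) :
    ∀ᵐ x ∂μ, μ {x} = 0 → ν.rnDeriv μ x = 0 := by
  filter_upwards [Besicovitch.ae_tendsto_rnDeriv ν μ] with x hx hatom
  have hs0 : (0:ℝ) < s := lt_trans one_pos hs
  -- μ (closedBall x r) → 0 as r → 0⁺
  have hμ : Tendsto (fun r : ℝ => μ (Metric.closedBall x r)) (𝓝[>] (0:ℝ)) (𝓝 0) := by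
    have h1 := tendsto_measure_cthickening_of_isClosed (μ := μ) (s := {x})
      ⟨1, zero_lt_one, measure_ne_top _ _⟩ isClosed_singleton
    rw [hatom] at h1
    refine (h1.mono_left nhdsWithin_le_nhds).congr' ?_
    filter_upwards [self_mem_nhdsWithin] with r hr
    rw [Metric.cthickening_singleton x (le_of_lt hr)]
  -- the bound tends to 0
  have hb : Tendsto (fun r : ℝ =>
      ENNReal.ofReal C ^ s * μ (Metric.closedBall x r) ^ (s - 1)) (𝓝[>] (0:ℝ)) (𝓝 0) := by
    have hc : ENNReal.ofReal C ^ s ≠ ∞ :=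
      ENNReal.rpow_ne_top_of_nonneg (le_of_lt hs0) ENNReal.ofReal_ne_top
    exact (ENNReal.tendsto_const_mul_rpow_nhds_zero_of_pos hc (by linarith)).comp hμ
  -- pointwise bound on the ratio
  have hle : ∀ r : ℝ, ν (Metric.closedBall x r) / μ (Metric.closedBall x r) ≤
      ENNReal.ofReal C ^ s * μ (Metric.closedBall x r) ^ (s - 1) := by
    intro r
    set m := μ (Metric.closedBall x r) with hm
    have hν := h (Metric.closedBall x r) measurableSet_closedBall
    rw [ENNReal.mul_rpow_of_nonneg _ _ (le_of_lt hs0)] at hν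
    by_cases hm0 : m = 0
    · have : ν (Metric.closedBall x r) = 0 := by
        refine le_antisymm ?_ zero_le
        calc ν (Metric.closedBall x r) ≤ ENNReal.ofReal C ^ s * m ^ s := hν
          _ = 0 := by rw [hm0, ENNReal.zero_rpow_of_pos hs0, mul_zero]
      simp [this]
    · have hmtop : m ≠ ∞ := measure_ne_top _ _
      refine ENNReal.div_le_of_le_mul ?_
      calc ν (Metric.closedBall x r) ≤ ENNReal.ofReal C ^ s * m ^ s := hν
        _ = ENNReal.ofReal C ^ s * m ^ (s - 1) * m := by
            rw [mul_assoc]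
            congr 1
            nth_rewrite 3 [← ENNReal.rpow_one m]
            rw [← ENNReal.rpow_add _ _ hm0 hmtop, sub_add_cancel]
  -- squeeze
  have hsq : Tendsto (fun r : ℝ => ν (Metric.closedBall x r) / μ (Metric.closedBall x r))
      (𝓝[>] (0:ℝ)) (𝓝 0) := by
    refine tendsto_of_tendsto_of_tendsto_of_le_of_le tendsto_const_nhds hb
      (fun r => zero_le) (fun r => hle r)
  exact tendsto_nhds_unique hx hsq
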